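/- Let d ≥ 1 and λ > 0. The bilinear form ⟨·,·⟩_{−2} is positive definite on the space of real polynomials in d variables: ⟨f,f⟩_{−2} ≥ 0 for every polynomial f, and ⟨f,f⟩_{−2} = 0 implies f = 0. -/

import Mathlib

open MvPolynomial MeasureTheory

/-- The Laplacian `Δ = ∑ ∂²/∂xᵢ²` acting on polynomials in `d` variables. -/
noncomputable def lap {d : ℕ} (P : MvPolynomial (Fin d) ℝ) : MvPolynomial (Fin d) ℝ :=
  ∑ i, pderiv i (pderiv i P)

/-- The polynomial `‖x‖² = x₁² + ⋯ + x_d²`. -/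
noncomputable def normSq (d : ℕ) : MvPolynomial (Fin d) ℝ := ∑ i, X i ^ 2

/-- Evaluation of a polynomial at a point of Euclidean space. -/
noncomputable def evalP {d : ℕ} (f : MvPolynomial (Fin d) ℝ)
    (x : EuclideanSpace ℝ (Fin d)) : ℝ :=
  MvPolynomial.eval (fun i => x i) f

/-- The closed unit ball `B^d ⊆ ℝ^d`. -/
noncomputable def ballD (d : ℕ) : Set (EuclideanSpace ℝ (Fin d)) :=
  Metric.closedBall 0 1

/-- The surface measure `dω` on the unit sphere `S^{d−1}`. -/
noncomputable def sphereMeas (d : ℕ) :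
    Measure (Metric.sphere (0 : EuclideanSpace ℝ (Fin d)) 1) :=
  (volume : Measure (EuclideanSpace ℝ (Fin d))).toSphere

/-- The total surface area `ω_d = ∫_{S^{d−1}} dω`. -/
noncomputable def omegaD (d : ℕ) : ℝ := (sphereMeas d Set.univ).toReal

/-- The volume of the unit ball `B^d`. -/
noncomputable def volB (d : ℕ) : ℝ := (volume (ballD d)).toReal

/-- The inner product
`⟨f,g⟩_{−2} = (λ/ω_d) ∫_{B^d} Δf Δg dx + (1/ω_d) ∫_{S^{d−1}} f g dω`. -/
noncomputable def innerNeg2 (d : ℕ) (lam : ℝ) (f g : MvPolynomial (Fin d) ℝ) : ℝ :=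
  (lam / omegaD d) * ∫ x in ballD d, evalP (lap f) x * evalP (lap g) x +
    (1 / omegaD d) * ∫ y : Metric.sphere (0 : EuclideanSpace ℝ (Fin d)) 1,
      evalP f y * evalP g y ∂(sphereMeas d)

/-- The inner product
`⟨f,g⟩_Δ = a_d ∫_{B^d} Δ[(1−‖x‖²)f] Δ[(1−‖x‖²)g] dx`, `a_d = 1/(4d² vol(B^d))`. -/
noncomputable def innerDelta (d : ℕ) (f g : MvPolynomial (Fin d) ℝ) : ℝ :=
  (1 / (4 * (d : ℝ) ^ 2 * volB d)) *
    ∫ x in ballD d,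
      evalP (lap ((1 - normSq d) * f)) x * evalP (lap ((1 - normSq d) * g)) x


namespace Aux

variable {d : ℕ}

lemma degree_sub_single {u : Fin d →₀ ℕ} {i : Fin d} (h : u i ≠ 0) :
    Finsupp.degree (u - Finsupp.single i 1) = Finsupp.degree u - 1 := by
  have hle : Finsupp.single i 1 ≤ u := by
    rw [Finsupp.single_le_iff]; omega
  have : (u - Finsupp.single i 1) + Finsupp.single i 1 = u := tsub_add_cancel_of_le hle
  have hdeg : Finsupp.degree (u - Finsupp.single i 1) + 1 = Finsupp.degree u := by
    conv_rhs => rw [← this]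
    simp [Finsupp.degree_eq_weight_one, map_add, Finsupp.weight, Finsupp.linearCombination_single]
  omega

lemma pderiv_isHomogeneous {p : MvPolynomial (Fin d) ℝ} {n : ℕ}
    (hp : p.IsHomogeneous n) (i : Fin d) : (pderiv i p).IsHomogeneous (n - 1) := by
  rw [p.as_sum, map_sum]
  apply MvPolynomial.IsHomogeneous.sum
  intro u hu
  rw [pderiv_monomial]
  by_cases h0 : u i = 0
  · rw [h0]; simp only [Nat.cast_zero, mul_zero, map_zero]
    exact MvPolynomial.isHomogeneous_zero _ _ _
  · apply MvPolynomial.isHomogeneous_monomial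
    have hd : Finsupp.degree u = n := by
      have := hp (MvPolynomial.mem_support_iff.mp hu)
      rwa [Finsupp.degree_eq_weight_one]
    rw [degree_sub_single h0, hd]

lemma euler_monomial (u : Fin d →₀ ℕ) (c : ℝ) :
    ∑ i, X i * pderiv i (monomial u c) = (Finsupp.degree u) • monomial u c := by
  have huniv : Finsupp.degree u = ∑ i, u i := by
    rw [Finsupp.degree]
    exact Finset.sum_subset (Finset.subset_univ _)
      (fun i _ hi => Finsupp.notMem_support_iff.mp hi)
  have hterm : ∀ i : Fin d, X i * pderiv i (monomial u c) = (u i) • monomial u c := by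
    intro i
    rw [pderiv_monomial]
    by_cases h0 : u i = 0
    · rw [h0]; simp
    · have hle : Finsupp.single i 1 ≤ u := by rw [Finsupp.single_le_iff]; omega
      rw [X, monomial_mul, smul_monomial]
      rw [add_comm, tsub_add_cancel_of_le hle]
      congr 1
      push_cast
      ring
  rw [Finset.sum_congr rfl (fun i _ => hterm i), huniv, ← Finset.sum_smul]

lemma euler {p : MvPolynomial (Fin d) ℝ} {n : ℕ} (hp : p.IsHomogeneous n) :
    ∑ i, X i * pderiv i p = n • p := by
  conv_lhs => rw [p.as_sum]
  simp_rw [map_sum, Finset.mul_sum]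
  rw [Finset.sum_comm]
  have : ∀ u ∈ p.support, ∑ i, X i * pderiv i (monomial u (coeff u p))
      = n • monomial u (coeff u p) := by
    intro u hu
    rw [euler_monomial]
    congr 1
    have := hp (MvPolynomial.mem_support_iff.mp hu)
    rwa [Finsupp.degree_eq_weight_one]
  rw [Finset.sum_congr rfl this, ← Finset.smul_sum, ← p.as_sum]

end Aux

namespace Aux
variable {d : ℕ}

lemma C_two : (C (2:ℝ) : MvPolynomial (Fin d) ℝ) = 2 := map_ofNat C 2

lemma lap_add (p q : MvPolynomial (Fin d) ℝ) : lap (p + q) = lap p + lap q := by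
  simp [lap, map_add, Finset.sum_add_distrib]

lemma lap_sum {ι : Type*} (t : Finset ι) (f : ι → MvPolynomial (Fin d) ℝ) :
    lap (∑ k ∈ t, f k) = ∑ k ∈ t, lap (f k) := by
  simp [lap, map_sum]
  exact Finset.sum_comm

lemma lap_C_mul (a : ℝ) (p : MvPolynomial (Fin d) ℝ) : lap (C a * p) = C a * lap p := by
  simp [lap, pderiv_C_mul, Finset.mul_sum]

lemma lap_isHomogeneous {p : MvPolynomial (Fin d) ℝ} {n : ℕ} (hp : p.IsHomogeneous n) :
    (lap p).IsHomogeneous (n - 2) := by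
  apply MvPolynomial.IsHomogeneous.sum
  intro i _
  have := pderiv_isHomogeneous (pderiv_isHomogeneous hp i) i
  have he : n - 1 - 1 = n - 2 := by omega
  rwa [he] at this

lemma eq_C_of_isHomogeneous_zero {p : MvPolynomial (Fin d) ℝ} (hp : p.IsHomogeneous 0) :
    p = C (coeff 0 p) := by
  have htd : p.totalDegree = 0 := Nat.le_zero.mp hp.totalDegree_le
  ext u
  rw [coeff_C]
  split_ifs with h
  · subst h; rfl
  · by_contra hc
    have hu : u ∈ p.support := MvPolynomial.mem_support_iff.mpr hc
    have h0 : (u.sum fun _ e => e) = 0 :=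
      Nat.le_zero.mp (htd ▸ MvPolynomial.le_totalDegree hu)
    apply h
    ext i
    simp only [Finsupp.coe_zero, Pi.zero_apply]
    by_contra hne
    have hi : i ∈ u.support := Finsupp.mem_support_iff.mpr (fun h => hne h.symm)
    have : u i ≤ u.sum fun _ e => e := Finset.single_le_sum (by intro j _; exact Nat.zero_le _) hi
    omega

lemma lap_of_low {p : MvPolynomial (Fin d) ℝ} {n : ℕ} (hp : p.IsHomogeneous n) (hn : n ≤ 1) :
    lap p = 0 := by
  apply Finset.sum_eq_zero
  intro i _
  have h1 : (pderiv i p).IsHomogeneous 0 := by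
    have := pderiv_isHomogeneous hp i
    convert this using 1
    omega
  rw [eq_C_of_isHomogeneous_zero h1, pderiv_C]

lemma lap_mul (p q : MvPolynomial (Fin d) ℝ) :
    lap (p * q) = lap p * q + C 2 * (∑ i, pderiv i p * pderiv i q) + p * lap q := by
  unfold lap
  simp_rw [pderiv_mul, map_add, pderiv_mul]
  rw [Finset.sum_mul, Finset.mul_sum, Finset.mul_sum, ← Finset.sum_add_distrib,
    ← Finset.sum_add_distrib]
  apply Finset.sum_congr rfl
  intro i _
  rw [C_two]
  ring

lemma pderiv_normSq (i : Fin d) : pderiv i (normSq d) = C 2 * X i := by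
  rw [normSq, map_sum]
  rw [Finset.sum_eq_single i]
  · rw [pderiv_pow, pderiv_X_self]
    norm_num
    exact C_two.symm
  · intro j _ hj
    rw [pderiv_pow, pderiv_X_of_ne hj]
    ring
  · intro h
    exact absurd (Finset.mem_univ i) h

lemma lap_normSq : lap (normSq d) = C (2 * (d : ℝ)) := by
  unfold lap
  simp_rw [pderiv_normSq]
  simp only [pderiv_C_mul, pderiv_X_self, mul_one]
  rw [Finset.sum_const, Finset.card_univ, Fintype.card_fin, nsmul_eq_mul]
  rw [show ((d : MvPolynomial (Fin d) ℝ)) = C (d : ℝ) from (map_natCast MvPolynomial.C d).symm]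
  rw [← MvPolynomial.C_mul]
  ring_nf

end Aux

namespace Aux
variable {d : ℕ}

lemma lap_zero : lap (0 : MvPolynomial (Fin d) ℝ) = 0 := by simp [lap]

lemma lap_sub (p q : MvPolynomial (Fin d) ℝ) : lap (p - q) = lap p - lap q := by
  simp [lap, map_sub, Finset.sum_sub_distrib]

lemma lap_one : lap (1 : MvPolynomial (Fin d) ℝ) = 0 := by simp [lap]

lemma normSq_isHomogeneous : (normSq d).IsHomogeneous 2 :=
  MvPolynomial.IsHomogeneous.sum _ _ _ (fun i _ => MvPolynomial.isHomogeneous_X_pow i 2)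

lemma homogComp_ne_zero {g : MvPolynomial (Fin d) ℝ} (hg : g ≠ 0) :
    homogeneousComponent g.totalDegree g ≠ 0 := by
  have hsupp : g.support.Nonempty :=
    Finset.nonempty_iff_ne_empty.mpr (fun h => hg (MvPolynomial.support_eq_empty.mp h))
  obtain ⟨u, hu, hum⟩ := Finset.exists_mem_eq_sup g.support hsupp (fun s => s.sum fun _ e => e)
  intro h0
  have := MvPolynomial.coeff_homogeneousComponent (n := g.totalDegree) (φ := g) u
  rw [h0] at this
  have hum' : g.totalDegree = u.sum fun _ e => e := hum
  have hdeg : Finsupp.degree u = g.totalDegree := by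
    have h1 : Finsupp.degree u = u.sum fun _ e => e := rfl
    rw [h1, ← hum']
  rw [if_pos hdeg] at this
  exact (MvPolynomial.mem_support_iff.mp hu) this.symm

/-- The fundamental recursion step. -/
lemma rec_step (p : MvPolynomial (Fin d) ℝ) (k : ℕ) (c : ℝ)
    (hp : p.IsHomogeneous k)
    (hrel : normSq d * lap p + C c * p = 0) :
    normSq d * lap (lap p) + C (c + 2*(d:ℝ) + 4*((k-2 : ℕ) : ℝ)) * lap p = 0 := by
  have h2 : lap (normSq d * lap p + C c * p) = 0 := by rw [hrel, lap_zero]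
  rw [lap_add, lap_mul, lap_C_mul, lap_normSq] at h2
  have hsum : ∑ i, pderiv i (normSq d) * pderiv i (lap p)
      = 2 * ∑ i, X i * pderiv i (lap p) := by
    rw [Finset.mul_sum]
    apply Finset.sum_congr rfl
    intro i _
    rw [pderiv_normSq, C_two]
    ring
  have heuler : ∑ i, X i * pderiv i (lap p) = (k-2 : ℕ) • lap p :=
    euler (lap_isHomogeneous hp)
  rw [hsum, heuler, nsmul_eq_mul] at h2
  rw [show ((k - 2 : ℕ) : MvPolynomial (Fin d) ℝ) = C ((k-2 : ℕ) : ℝ) from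
    (map_natCast MvPolynomial.C _).symm] at h2
  simp only [map_add, map_mul, map_ofNat, map_natCast, C_two] at h2 ⊢
  linear_combination h2

/-- Injectivity: if `Δ((1 - ‖x‖²)·g) = 0` then `g = 0`. -/
lemma key_inj (hd : 1 ≤ d) (g : MvPolynomial (Fin d) ℝ)
    (h : lap ((1 - normSq d) * g) = 0) : g = 0 := by
  classical
  -- Expand the hypothesis into the identity E1
  have hE1 : lap g = normSq d * lap g + C (4:ℝ) * (∑ i, X i * pderiv i g)
      + C (2*(d:ℝ)) * g := by
    rw [lap_mul, lap_sub, lap_one, lap_normSq] at h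
    have hsum : ∑ i, pderiv i ((1 : MvPolynomial (Fin d) ℝ) - normSq d) * pderiv i g
        = -(2 * ∑ i, X i * pderiv i g) := by
      rw [Finset.mul_sum, ← Finset.sum_neg_distrib]
      apply Finset.sum_congr rfl
      intro i _
      rw [map_sub, pderiv_one, pderiv_normSq, C_two]
      ring
    rw [hsum] at h
    simp only [map_ofNat] at h ⊢
    linear_combination h
  -- now the contradiction argument
  by_contra hg
  set m := g.totalDegree with hm
  have hgm : homogeneousComponent m g ≠ 0 := homogComp_ne_zero hg
  set gm := homogeneousComponent m g with hgmdef
  rcases Nat.eq_zero_or_pos m with hm0 | hm1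
  · -- degree zero case
    have hg0 : g.IsHomogeneous 0 :=
      (MvPolynomial.totalDegree_zero_iff_isHomogeneous (p := g)).mp (hm.symm.trans hm0)
    have h1 : lap g = 0 := lap_of_low hg0 (by omega)
    have h2 : ∑ i, X i * pderiv i g = 0 := by
      rw [euler hg0, zero_smul]
    rw [h1, h2, mul_zero, zero_add, mul_zero, zero_add] at hE1
    have hC : (C (2*(d:ℝ)) : MvPolynomial (Fin d) ℝ) ≠ 0 := by
      rw [Ne, MvPolynomial.C_eq_zero]
      positivity
    rcases mul_eq_zero.mp hE1.symm with h | h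
    · exact hC h
    · exact hg h
  -- main case : m ≥ 1. Extract the degree-m homogeneous component of E1.
  have hgdec : g = ∑ k ∈ Finset.range (m+1), homogeneousComponent k g :=
    (MvPolynomial.sum_homogeneousComponent g).symm
  have hlapdec : lap g = ∑ k ∈ Finset.range (m+1), lap (homogeneousComponent k g) := by
    rw [← lap_sum]
    exact congrArg lap hgdec
  have hkhom : ∀ k, (homogeneousComponent k g).IsHomogeneous k := fun k =>
    MvPolynomial.homogeneousComponent_isHomogeneous k g
  -- piece 1
  have P1 : homogeneousComponent m (lap g) = 0 := by
    rw [hlapdec, map_sum]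
    apply Finset.sum_eq_zero
    intro k hk
    rw [Finset.mem_range] at hk
    rw [MvPolynomial.homogeneousComponent_of_mem
      ((MvPolynomial.mem_homogeneousSubmodule _ _).mpr (lap_isHomogeneous (hkhom k))), if_neg]
    omega
  -- piece 2
  have P2 : homogeneousComponent m (normSq d * lap g) = normSq d * lap gm := by
    have hdec : normSq d * lap g
        = ∑ k ∈ Finset.range (m+1), normSq d * lap (homogeneousComponent k g) := by
      rw [hlapdec, Finset.mul_sum]
    rw [hdec, map_sum, Finset.sum_eq_single m]
    · by_cases hm2 : m ≤ 1
      · rw [lap_of_low (hkhom m) hm2]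
        simp [hgmdef, lap_of_low (hkhom m) hm2]
      · have hhom : (normSq d * lap (homogeneousComponent m g)).IsHomogeneous m := by
          have := normSq_isHomogeneous.mul (lap_isHomogeneous (hkhom m))
          have he : 2 + (m - 2) = m := by omega
          rwa [he] at this
        rw [MvPolynomial.homogeneousComponent_of_mem
          ((MvPolynomial.mem_homogeneousSubmodule _ _).mpr hhom), if_pos rfl]
    · intro k _ hkm
      by_cases hk2 : k ≤ 1
      · rw [lap_of_low (hkhom k) hk2, mul_zero, map_zero]
      · have hhom : (normSq d * lap (homogeneousComponent k g)).IsHomogeneous k := by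
          have := normSq_isHomogeneous.mul (lap_isHomogeneous (hkhom k))
          have he : 2 + (k - 2) = k := by omega
          rwa [he] at this
        rw [MvPolynomial.homogeneousComponent_of_mem
          ((MvPolynomial.mem_homogeneousSubmodule _ _).mpr hhom), if_neg (Ne.symm hkm)]
    · intro hmm
      exact absurd (Finset.mem_range.mpr (by omega)) hmm
  -- piece 3
  have P3 : homogeneousComponent m (∑ i, X i * pderiv i g) = m • gm := by
    have hEdec : (∑ i, X i * pderiv i g)
        = ∑ k ∈ Finset.range (m+1), (k • homogeneousComponent k g) := by
      have hp : ∀ i : Fin d, pderiv i g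
          = ∑ k ∈ Finset.range (m+1), pderiv i (homogeneousComponent k g) := by
        intro i
        rw [← map_sum]
        exact congrArg (pderiv i) hgdec
      calc ∑ i, X i * pderiv i g
          = ∑ i, ∑ k ∈ Finset.range (m+1), X i * pderiv i (homogeneousComponent k g) := by
            apply Finset.sum_congr rfl
            intro i _
            rw [hp i, Finset.mul_sum]
        _ = ∑ k ∈ Finset.range (m+1), ∑ i, X i * pderiv i (homogeneousComponent k g) :=
            Finset.sum_comm
        _ = ∑ k ∈ Finset.range (m+1), (k • homogeneousComponent k g) := by
            apply Finset.sum_congr rfl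
            intro k _
            exact euler (hkhom k)
    rw [hEdec, map_sum, Finset.sum_eq_single m]
    · rw [map_nsmul]
      congr 1
      rw [MvPolynomial.homogeneousComponent_of_mem
        ((MvPolynomial.mem_homogeneousSubmodule _ _).mpr (hkhom m)), if_pos rfl]
    · intro k _ hkm
      rw [map_nsmul, MvPolynomial.homogeneousComponent_of_mem
        ((MvPolynomial.mem_homogeneousSubmodule _ _).mpr (hkhom k)), if_neg (Ne.symm hkm),
        smul_zero]
    · intro hmm
      exact absurd (Finset.mem_range.mpr (by omega)) hmm
  -- piece 4
  have P4 : homogeneousComponent m (C (2*(d:ℝ)) * g) = C (2*(d:ℝ)) * gm :=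
    MvPolynomial.homogeneousComponent_C_mul g m _
  -- Combine : the base relation
  have K0 : normSq d * lap gm + C (4*(m:ℝ) + 2*(d:ℝ)) * gm = 0 := by
    have := congrArg (homogeneousComponent m) hE1
    rw [map_add, map_add, P1, P2, P4] at this
    have hC4 : homogeneousComponent m (C (4:ℝ) * (∑ i, X i * pderiv i g))
        = C (4:ℝ) * (m • gm) := by
      rw [MvPolynomial.homogeneousComponent_C_mul, P3]
    rw [hC4] at this
    rw [nsmul_eq_mul, show ((m : ℕ) : MvPolynomial (Fin d) ℝ) = C ((m : ℕ) : ℝ) from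
      (map_natCast MvPolynomial.C _).symm] at this
    simp only [map_add, map_mul, map_ofNat, map_natCast] at this ⊢
    linear_combination -this
  -- the iterates
  have hIter : ∀ j : ℕ, (lap^[j] gm).IsHomogeneous (m - 2*j) := by
    intro j
    induction j with
    | zero => simpa using hkhom m
    | succ j ih =>
      rw [Function.iterate_succ_apply']
      have := lap_isHomogeneous ih
      have he : m - 2*j - 2 = m - 2*(j+1) := by omega
      rwa [he] at this
  have hrel : ∀ j : ℕ, ∃ c : ℝ, 0 < c ∧
      normSq d * lap (lap^[j] gm) + C c * lap^[j] gm = 0 := by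
    intro j
    induction j with
    | zero =>
      refine ⟨4*(m:ℝ) + 2*(d:ℝ), by positivity, ?_⟩
      simpa using K0
    | succ j ih =>
      obtain ⟨c, hc, hrel⟩ := ih
      refine ⟨c + 2*(d:ℝ) + 4*(((m - 2*j) - 2 : ℕ) : ℝ), ?_, ?_⟩
      · have h1 : (1:ℝ) ≤ (d:ℝ) := by exact_mod_cast hd
        have h2 : (0:ℝ) ≤ (((m - 2*j) - 2 : ℕ) : ℝ) := Nat.cast_nonneg _
        linarith
      · have := rec_step (lap^[j] gm) (m - 2*j) c (hIter j) hrel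
        rw [Function.iterate_succ_apply']
        exact this
  have htop : lap^[m+1] gm = 0 := by
    rw [Function.iterate_succ_apply']
    exact lap_of_low (hIter m) (by omega)
  have hdown : ∀ k : ℕ, lap^[k] gm = 0 → gm = 0 := by
    intro k
    induction k with
    | zero => intro h0; simpa using h0
    | succ k ih =>
      intro h0
      obtain ⟨c, hc, hrelk⟩ := hrel k
      rw [Function.iterate_succ_apply'] at h0
      rw [h0, mul_zero, zero_add] at hrelk
      rcases mul_eq_zero.mp hrelk with h | h
      · exact absurd (MvPolynomial.C_eq_zero.mp h) (ne_of_gt hc)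
      · exact ih h
  exact hgm (hdown (m+1) htop)

end Aux

namespace Aux

/-- Evaluation of polynomials is analytic. -/
lemma analyticAt_eval {d : ℕ} (f : MvPolynomial (Fin d) ℝ) (x : EuclideanSpace ℝ (Fin d)) :
    AnalyticAt ℝ (fun x : EuclideanSpace ℝ (Fin d) => eval (fun i => x i) f) x := by
  induction f using MvPolynomial.induction_on with
  | C a => simpa using analyticAt_const (v := a)
  | add p q hp hq =>
    have : (fun x : EuclideanSpace ℝ (Fin d) => eval (fun i => x i) (p + q))
        = fun x => eval (fun i => x i) p + eval (fun i => x i) q := by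
      funext x; simp
    rw [this]; exact hp.add hq
  | mul_X p i hp =>
    have : (fun x : EuclideanSpace ℝ (Fin d) => eval (fun i => x i) (p * X i))
        = fun x => eval (fun i => x i) p * x i := by
      funext x; simp
    rw [this]
    exact hp.mul ((EuclideanSpace.proj (𝕜 := ℝ) i).analyticAt x)

/-- A polynomial vanishing on a nonempty open set is zero. -/
lemma eq_zero_of_eqOn_open {d : ℕ} (f : MvPolynomial (Fin d) ℝ)
    {U : Set (EuclideanSpace ℝ (Fin d))} (hU : IsOpen U) (hne : U.Nonempty)
    (h : ∀ x ∈ U, eval (fun i => x i) f = 0) : f = 0 := by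
  obtain ⟨x₀, hx₀⟩ := hne
  have hA : AnalyticOnNhd ℝ (fun x : EuclideanSpace ℝ (Fin d) => eval (fun i => x i) f)
      Set.univ := fun x _ => analyticAt_eval f x
  have hev : (fun x : EuclideanSpace ℝ (Fin d) => eval (fun i => x i) f) =ᶠ[nhds x₀] 0 :=
    Filter.eventuallyEq_of_mem (hU.mem_nhds hx₀) h
  have hzero := hA.eqOn_zero_of_preconnected_of_eventuallyEq_zero isPreconnected_univ
    (Set.mem_univ x₀) hev
  apply MvPolynomial.funext
  intro v
  have := hzero (Set.mem_univ (WithLp.toLp 2 v))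
  simpa using this

lemma sum_sq_eq_norm_sq {k : ℕ} (y : EuclideanSpace ℝ (Fin k)) :
    ∑ i, (y i)^2 = ‖y‖^2 := by
  rw [EuclideanSpace.norm_eq, Real.sq_sqrt (by positivity)]
  apply Finset.sum_congr rfl
  intro i _
  rw [Real.norm_eq_abs, sq_abs]

/-- A polynomial vanishing on the unit sphere is divisible by `1 - ‖x‖²`. -/
lemma sphere_vanish_factor {n : ℕ} (f : MvPolynomial (Fin (n+1)) ℝ)
    (hf : ∀ x : EuclideanSpace ℝ (Fin (n+1)), ‖x‖ = 1 → eval (fun i => x i) f = 0) :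
    ∃ g, f = (1 - normSq (n+1)) * g := by
  classical
  set φ := MvPolynomial.finSuccEquiv ℝ n with hφ
  set q : Polynomial (MvPolynomial (Fin n) ℝ) :=
    Polynomial.X ^ 2 + Polynomial.C (normSq n - 1) with hqdef
  have hq : q.Monic := Polynomial.monic_X_pow_add (by
    apply lt_of_le_of_lt (Polynomial.degree_C_le)
    norm_num)
  have hqdeg : q.degree = 2 := Polynomial.degree_X_pow_add_C (by norm_num) _
  set r := φ f %ₘ q with hrdef
  set Q := φ f /ₘ q with hQdef
  have hsplit : r + q * Q = φ f := Polynomial.modByMonic_add_div (φ f) q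
  have hrd : r.degree ≤ 1 := by
    have := Polynomial.degree_modByMonic_lt (φ f) hq
    rw [hqdeg] at this
    exact Order.le_of_lt_succ (by exact_mod_cast this)
  have hr_eq : r = Polynomial.C (r.coeff 1) * Polynomial.X + Polynomial.C (r.coeff 0) :=
    Polynomial.eq_X_add_C_of_degree_le_one hrd
  set a := r.coeff 1 with hadef
  set b := r.coeff 0 with hbdef
  -- evaluate on the sphere
  have hkey : ∀ y : EuclideanSpace ℝ (Fin n), ‖y‖ < 1 →
      eval (fun i => y i) a = 0 ∧ eval (fun i => y i) b = 0 := by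
    intro y hy
    set s : Fin n → ℝ := fun i => y i with hsdef
    set t := Real.sqrt (1 - ‖y‖^2) with htdef
    have hy2 : ‖y‖^2 < 1 := by
      have h0 : 0 ≤ ‖y‖ := norm_nonneg y
      nlinarith
    have ht2 : t^2 = 1 - ‖y‖^2 := Real.sq_sqrt (by linarith)
    have htpos : 0 < t := Real.sqrt_pos.mpr (by linarith)
    have heval : ∀ ε : ℝ, ε^2 = 1 →
        eval s a * (ε * t) + eval s b = 0 := by
      intro ε hε
      set x : EuclideanSpace ℝ (Fin (n+1)) :=
        (WithLp.toLp 2 (Fin.cons (ε * t) s)) with hxdef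
      have hxnorm : ‖x‖ = 1 := by
        rw [EuclideanSpace.norm_eq]
        have hsum : ∑ i, ‖x i‖^2 = 1 := by
          have h1 : ∀ i : Fin (n+1), ‖x i‖^2 = (x i)^2 := fun i => by
            rw [Real.norm_eq_abs, sq_abs]
          rw [Finset.sum_congr rfl (fun i _ => h1 i), Fin.sum_univ_succ]
          have h0 : x 0 = ε * t := rfl
          have hsucc : ∀ j : Fin n, x j.succ = s j := fun j => rfl
          rw [h0, Finset.sum_congr rfl (fun j _ => by rw [hsucc j])]
          have h2 : ∑ i : Fin n, (s i)^2 = ‖y‖^2 := sum_sq_eq_norm_sq y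
          rw [h2, mul_pow, hε, ht2]
          ring
        rw [hsum, Real.sqrt_one]
      have h0 := hf x hxnorm
      have hx : (fun i => x i) = Fin.cons (ε * t) s := rfl
      rw [hx, MvPolynomial.eval_eq_eval_mv_eval'] at h0
      rw [← hsplit] at h0
      rw [Polynomial.map_add, Polynomial.map_mul, Polynomial.eval_add, Polynomial.eval_mul] at h0
      have hqe : Polynomial.eval (ε * t) (Polynomial.map (eval s) q) = 0 := by
        rw [hqdef]
        simp only [Polynomial.map_add, Polynomial.map_pow, Polynomial.map_X, Polynomial.map_C,
          Polynomial.eval_add, Polynomial.eval_pow, Polynomial.eval_X, Polynomial.eval_C]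
        rw [map_sub, map_one]
        have : eval s (normSq n) = ‖y‖^2 := by
          rw [normSq, map_sum]
          rw [show ∑ i, eval s (X i ^ 2) = ∑ i, (s i)^2 from
            Finset.sum_congr rfl (fun i _ => by simp)]
          exact sum_sq_eq_norm_sq y
        rw [this, mul_pow, hε, ht2]
        ring
      rw [hqe, zero_mul, add_zero] at h0
      rw [hr_eq] at h0
      simp only [Polynomial.map_add, Polynomial.map_mul, Polynomial.map_C, Polynomial.map_X,
        Polynomial.eval_add, Polynomial.eval_mul, Polynomial.eval_C, Polynomial.eval_X] at h0
      linarith [h0]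
    have h1 := heval 1 (by norm_num)
    have h2 := heval (-1) (by norm_num)
    constructor
    · have : eval s a * t = 0 := by linarith
      rcases mul_eq_zero.mp this with h | h
      · exact h
      · exact absurd h (ne_of_gt htpos)
    · linarith
  have hball : ∀ p : MvPolynomial (Fin n) ℝ,
      (∀ y : EuclideanSpace ℝ (Fin n), ‖y‖ < 1 → eval (fun i => y i) p = 0) → p = 0 := by
    intro p hp
    apply eq_zero_of_eqOn_open p (Metric.isOpen_ball (x := (0 : EuclideanSpace ℝ (Fin n))) (ε := 1))
      (Metric.nonempty_ball.mpr one_pos)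
    intro x hx
    exact hp x (by simpa [Metric.mem_ball, dist_zero_right] using hx)
  have ha : a = 0 := hball a (fun y hy => (hkey y hy).1)
  have hb : b = 0 := hball b (fun y hy => (hkey y hy).2)
  have hr0 : r = 0 := by rw [hr_eq, ha, hb]; simp
  have hfq : φ f = q * Q := by rw [← hsplit, hr0, zero_add]
  -- identify `φ.symm q`
  have hqimg : φ (normSq (n+1) - 1) = q := by
    rw [map_sub, map_one, hqdef]
    have hsucc : ∀ j : Fin n, φ (X j.succ ^ 2) = Polynomial.C (X j ^ 2) := fun j => by
      rw [map_pow, MvPolynomial.finSuccEquiv_X_succ, ← map_pow]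
    have : φ (normSq (n+1)) = Polynomial.X ^ 2 + Polynomial.C (normSq n) := by
      rw [normSq, map_sum, Fin.sum_univ_succ]
      rw [show φ (X (0 : Fin (n+1)) ^ 2) = Polynomial.X ^ 2 by
        rw [map_pow, MvPolynomial.finSuccEquiv_X_zero]]
      congr 1
      rw [Finset.sum_congr rfl (fun j _ => hsucc j), ← map_sum]
      simp [normSq]
    rw [this]
    rw [map_sub, map_one]
    ring
  have : f = (normSq (n+1) - 1) * φ.symm Q := by
    have := congrArg φ.symm hfq
    rw [AlgEquiv.symm_apply_apply] at this
    rw [this, map_mul]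
    congr 1
    rw [← hqimg, AlgEquiv.symm_apply_apply]
  refine ⟨-(φ.symm Q), ?_⟩
  rw [this]
  ring

end Aux

section ANA
open Aux Metric Set
open scoped Pointwise

variable {d : ℕ}

lemma continuous_evalP (f : MvPolynomial (Fin d) ℝ) : Continuous (evalP f) :=
  continuous_iff_continuousAt.mpr fun x => (analyticAt_eval f x).continuousAt

lemma omegaD_pos (hd : 1 ≤ d) : 0 < omegaD d := by
  rw [omegaD]
  have h1 : sphereMeas d Set.univ
      = (Module.finrank ℝ (EuclideanSpace ℝ (Fin d))) * volume (ball (0 : EuclideanSpace ℝ (Fin d)) 1) := by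
    rw [sphereMeas]
    exact MeasureTheory.Measure.toSphere_apply_univ _
  rw [h1, finrank_euclideanSpace_fin]
  apply ENNReal.toReal_pos
  · apply mul_ne_zero
    · simp
      omega
    · exact (measure_ball_pos volume 0 one_pos).ne'
  · exact ENNReal.mul_ne_top (ENNReal.natCast_ne_top d) measure_ball_lt_top.ne

lemma integrableOn_ball (p q : MvPolynomial (Fin d) ℝ) :
    MeasureTheory.IntegrableOn (fun x => evalP p x * evalP q x) (ballD d) volume := by
  apply ContinuousOn.integrableOn_compact (isCompact_closedBall 0 1)
  exact ((continuous_evalP p).mul (continuous_evalP q)).continuousOn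

lemma integrable_sphere (p q : MvPolynomial (Fin d) ℝ) :
    MeasureTheory.Integrable
      (fun y : Metric.sphere (0 : EuclideanSpace ℝ (Fin d)) 1 => evalP p y * evalP q y)
      (sphereMeas d) := by
  have hcont : Continuous
      (fun y : Metric.sphere (0 : EuclideanSpace ℝ (Fin d)) 1 => evalP p y * evalP q y) :=
    (((continuous_evalP p).comp continuous_subtype_val).mul
      ((continuous_evalP q).comp continuous_subtype_val))
  have : MeasureTheory.IsFiniteMeasure (sphereMeas d) := by
    rw [sphereMeas]; infer_instance
  obtain ⟨C, hC⟩ := isCompact_univ.exists_bound_of_continuousOn hcont.continuousOn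
  exact (MeasureTheory.integrable_const C).mono' hcont.aestronglyMeasurable
    (Filter.Eventually.of_forall fun y => by
      simpa using hC y (Set.mem_univ y))

lemma toSphere_open_pos (hd : 1 ≤ d)
    {s : Set (Metric.sphere (0 : EuclideanSpace ℝ (Fin d)) 1)}
    (hs : IsOpen s) (hne : s.Nonempty) : 0 < sphereMeas d s := by
  obtain ⟨V, hV, hVs⟩ := isOpen_induced_iff.mp hs
  rw [sphereMeas, MeasureTheory.Measure.toSphere_apply' _ hs.measurableSet]
  set T : Set (EuclideanSpace ℝ (Fin d)) := (↑) '' s with hT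
  set U : Set (EuclideanSpace ℝ (Fin d)) :=
    Metric.ball 0 1 ∩ ({(0 : EuclideanSpace ℝ (Fin d))}ᶜ ∩ (fun x => ‖x‖⁻¹ • x) ⁻¹' V) with hU
  have hφcont : ContinuousOn (fun x : EuclideanSpace ℝ (Fin d) => ‖x‖⁻¹ • x)
      ({(0 : EuclideanSpace ℝ (Fin d))}ᶜ) := by
    apply ContinuousOn.fun_smul _ continuousOn_id
    exact (continuous_norm.continuousOn).inv₀ fun x hx =>
      norm_ne_zero_iff.mpr (by simpa using hx)
  have hUopen : IsOpen U :=
    Metric.isOpen_ball.inter (hφcont.isOpen_inter_preimage isOpen_compl_singleton hV)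
  have hUne : U.Nonempty := by
    obtain ⟨y₀, hy₀⟩ := hne
    refine ⟨(2⁻¹ : ℝ) • (y₀ : EuclideanSpace ℝ (Fin d)), ?_, ?_, ?_⟩
    · rw [Metric.mem_ball, dist_zero_right, norm_smul]
      have : ‖(y₀ : EuclideanSpace ℝ (Fin d))‖ = 1 :=
        mem_sphere_zero_iff_norm.mp y₀.2
      rw [this]
      norm_num
    · simp only [Set.mem_compl_iff, Set.mem_singleton_iff]
      intro h0
      have h1 : ‖(y₀ : EuclideanSpace ℝ (Fin d))‖ = 1 := mem_sphere_zero_iff_norm.mp y₀.2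
      have h2 : ‖(2⁻¹ : ℝ) • (y₀ : EuclideanSpace ℝ (Fin d))‖ = 2⁻¹ := by
        rw [norm_smul, h1]
        norm_num
      rw [h0, norm_zero] at h2
      norm_num at h2
    · show ‖(2⁻¹ : ℝ) • (y₀ : EuclideanSpace ℝ (Fin d))‖⁻¹ • _ ∈ V
      have h1 : ‖(y₀ : EuclideanSpace ℝ (Fin d))‖ = 1 := mem_sphere_zero_iff_norm.mp y₀.2
      rw [norm_smul, h1]
      have : ((‖(2⁻¹:ℝ)‖ * 1)⁻¹ : ℝ) • ((2⁻¹ : ℝ) • (y₀ : EuclideanSpace ℝ (Fin d)))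
          = (y₀ : EuclideanSpace ℝ (Fin d)) := by
        rw [smul_smul]
        norm_num
      rw [this]
      have : y₀ ∈ (↑) ⁻¹' V := hVs ▸ hy₀
      exact this
  have hsub : U ⊆ Set.Ioo (0:ℝ) 1 • T := by
    rintro x ⟨hx1, hx2, hx3⟩
    have hxne : x ≠ 0 := by simpa using hx2
    have hxnorm : 0 < ‖x‖ := norm_pos_iff.mpr hxne
    have hxlt : ‖x‖ < 1 := by rwa [Metric.mem_ball, dist_zero_right] at hx1
    have hbs : ‖x‖⁻¹ • x ∈ T := by
      have hmem : ‖(‖x‖⁻¹ • x)‖ = 1 := by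
        rw [norm_smul, norm_inv, norm_norm]
        field_simp
      refine ⟨⟨‖x‖⁻¹ • x, mem_sphere_zero_iff_norm.mpr hmem⟩, ?_, rfl⟩
      rw [← hVs]
      exact hx3
    refine ⟨‖x‖, ⟨hxnorm, hxlt⟩, ‖x‖⁻¹ • x, hbs, ?_⟩
    show ‖x‖ • ‖x‖⁻¹ • x = x
    rw [smul_smul]
    field_simp
    rw [one_smul]
  have hUpos : (0 : ENNReal) < volume U := hUopen.measure_pos volume hUne
  have hTpos : (0 : ENNReal) < volume (Set.Ioo (0:ℝ) 1 • T) :=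
    lt_of_lt_of_le hUpos (measure_mono hsub)
  rw [finrank_euclideanSpace_fin]
  exact ENNReal.mul_pos (by simp; omega) hTpos.ne'

end ANA


section FINAL
open Aux Metric Set MeasureTheory

variable {d : ℕ}

lemma ball_ae_vanish (h : EuclideanSpace ℝ (Fin d) → ℝ) (hcont : Continuous h)
    (hae : h =ᵐ[volume.restrict (ballD d)] 0) :
    ∀ x ∈ Metric.ball (0 : EuclideanSpace ℝ (Fin d)) 1, h x = 0 := by
  by_contra hc
  push_neg at hc
  obtain ⟨x₀, hx₀, hfx₀⟩ := hc
  set N : Set (EuclideanSpace ℝ (Fin d)) := {x | h x ≠ 0} with hN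
  have hNopen : IsOpen N := by
    have : N = h ⁻¹' ({0}ᶜ) := rfl
    rw [this]
    exact hcont.isOpen_preimage _ isOpen_compl_singleton
  set W := Metric.ball (0 : EuclideanSpace ℝ (Fin d)) 1 ∩ N with hW
  have hWopen : IsOpen W := Metric.isOpen_ball.inter hNopen
  have hWne : W.Nonempty := ⟨x₀, hx₀, hfx₀⟩
  have hWpos : (0 : ENNReal) < volume W := hWopen.measure_pos volume hWne
  have hnull : (volume.restrict (ballD d)) N = 0 := by
    have := hae
    rw [Filter.EventuallyEq, Filter.eventually_iff, mem_ae_iff] at this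
    have hset : {x | ¬ h x = (0 : EuclideanSpace ℝ (Fin d) → ℝ) x} = N := by
      ext x; simp [hN]
    rwa [← hset]
  rw [Measure.restrict_apply hNopen.measurableSet] at hnull
  have hWsub : W ⊆ N ∩ ballD d := fun x hx =>
    ⟨hx.2, Metric.ball_subset_closedBall hx.1⟩
  exact hWpos.ne' (measure_mono_null hWsub hnull)

lemma sphere_zero (hd : 1 ≤ d) (f : MvPolynomial (Fin d) ℝ)
    (h : ∫ y : Metric.sphere (0 : EuclideanSpace ℝ (Fin d)) 1,
        evalP f y * evalP f y ∂(sphereMeas d) = 0) :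
    ∀ x : EuclideanSpace ℝ (Fin d), ‖x‖ = 1 → evalP f x = 0 := by
  have hint := integrable_sphere (d := d) f f
  have hnn : 0 ≤ᵐ[sphereMeas d]
      fun y : Metric.sphere (0 : EuclideanSpace ℝ (Fin d)) 1 => evalP f y * evalP f y :=
    Filter.Eventually.of_forall fun y => mul_self_nonneg _
  have hae := (integral_eq_zero_iff_of_nonneg_ae hnn hint).mp h
  by_contra hc
  push_neg at hc
  obtain ⟨x₀, hx₀, hfx₀⟩ := hc
  set s : Set (Metric.sphere (0 : EuclideanSpace ℝ (Fin d)) 1) :=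
    {y | evalP f (y : EuclideanSpace ℝ (Fin d)) ≠ 0} with hsdef
  have hsopen : IsOpen s := by
    have : s = (fun y : Metric.sphere (0 : EuclideanSpace ℝ (Fin d)) 1 =>
        evalP f (y : EuclideanSpace ℝ (Fin d))) ⁻¹' ({0}ᶜ) := rfl
    rw [this]
    exact (((continuous_evalP f).comp continuous_subtype_val)).isOpen_preimage _
      isOpen_compl_singleton
  have hsne : s.Nonempty := ⟨⟨x₀, mem_sphere_zero_iff_norm.mpr hx₀⟩, hfx₀⟩
  have hpos := toSphere_open_pos hd hsopen hsne
  have hnull : sphereMeas d s = 0 := by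
    rw [Filter.EventuallyEq, Filter.eventually_iff, mem_ae_iff] at hae
    apply measure_mono_null _ hae
    intro y hy
    simp only [Set.mem_setOf_eq, Pi.zero_apply]
    exact mul_self_ne_zero.mpr hy
  exact hpos.ne' hnull

end FINAL

theorem stmt15 (d : ℕ) (hd : 1 ≤ d) (lam : ℝ) (hlam : 0 < lam) :
    (∀ f : MvPolynomial (Fin d) ℝ, 0 ≤ innerNeg2 d lam f f) ∧
      ∀ f : MvPolynomial (Fin d) ℝ, innerNeg2 d lam f f = 0 → f = 0 := by
  have hω : 0 < omegaD d := omegaD_pos hd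
  have h2 : 0 < 1 / omegaD d := div_pos one_pos hω
  have hB : ∀ f : MvPolynomial (Fin d) ℝ,
      0 ≤ ∫ y : Metric.sphere (0 : EuclideanSpace ℝ (Fin d)) 1,
        evalP f y * evalP f y ∂(sphereMeas d) :=
    fun f => MeasureTheory.integral_nonneg (fun y => mul_self_nonneg _)
  have hmeas : MeasurableSet (ballD d) := by
    rw [ballD]; exact measurableSet_closedBall
  have hnonneg : ∀ f : MvPolynomial (Fin d) ℝ, 0 ≤ innerNeg2 d lam f f := by
    intro f
    rw [innerNeg2]
    apply mul_nonneg (le_of_lt (div_pos hlam hω))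
    apply MeasureTheory.setIntegral_nonneg hmeas
    intro x _
    exact add_nonneg (mul_self_nonneg _) (mul_nonneg h2.le (hB f))
  refine ⟨hnonneg, ?_⟩
  intro f h0
  rw [innerNeg2] at h0
  set K := (1 / omegaD d) * ∫ y : Metric.sphere (0 : EuclideanSpace ℝ (Fin d)) 1,
      evalP f y * evalP f y ∂(sphereMeas d) with hKdef
  have hKnn : 0 ≤ K := mul_nonneg h2.le (hB f)
  have hA0 : ∫ x in ballD d, (evalP (lap f) x * evalP (lap f) x + K) = 0 := by
    rcases mul_eq_zero.mp h0 with h | h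
    · exact absurd h (ne_of_gt (div_pos hlam hω))
    · exact h
  have hint : MeasureTheory.IntegrableOn
      (fun x => evalP (lap f) x * evalP (lap f) x + K) (ballD d) volume := by
    apply (integrableOn_ball (lap f) (lap f)).add
    exact (MeasureTheory.integrableOn_const_iff (by finiteness)).mpr
      (Or.inr (by rw [ballD]; exact measure_closedBall_lt_top))
  have hnn : 0 ≤ᵐ[volume.restrict (ballD d)]
      fun x => evalP (lap f) x * evalP (lap f) x + K :=
    Filter.Eventually.of_forall fun x =>
      add_nonneg (mul_self_nonneg _) hKnn
  have hae : (fun x => evalP (lap f) x * evalP (lap f) x + K)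
      =ᵐ[volume.restrict (ballD d)] 0 :=
    (MeasureTheory.integral_eq_zero_iff_of_nonneg_ae hnn hint).mp hA0
  have hpt := ball_ae_vanish (fun x => evalP (lap f) x * evalP (lap f) x + K)
    (((continuous_evalP (lap f)).mul (continuous_evalP (lap f))).add continuous_const) hae
  -- K = 0
  have h0ball : (0 : EuclideanSpace ℝ (Fin d)) ∈ Metric.ball (0 : EuclideanSpace ℝ (Fin d)) 1 :=
    Metric.mem_ball_self one_pos
  have hK0 : K = 0 := by
    have := hpt 0 h0ball
    have h1 := mul_self_nonneg (evalP (lap f) 0)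
    linarith
  -- lap f vanishes on the ball
  have hlapball : ∀ x ∈ Metric.ball (0 : EuclideanSpace ℝ (Fin d)) 1, evalP (lap f) x = 0 := by
    intro x hx
    have := hpt x hx
    rw [hK0, add_zero] at this
    exact mul_self_eq_zero.mp this
  have hlap : lap f = 0 :=
    Aux.eq_zero_of_eqOn_open (lap f) Metric.isOpen_ball (Metric.nonempty_ball.mpr one_pos)
      (fun x hx => hlapball x hx)
  -- f vanishes on the sphere
  have hB0 : ∫ y : Metric.sphere (0 : EuclideanSpace ℝ (Fin d)) 1,
      evalP f y * evalP f y ∂(sphereMeas d) = 0 := by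
    rcases mul_eq_zero.mp hK0 with h | h
    · exact absurd h (ne_of_gt h2)
    · exact h
  have hsph := sphere_zero hd f hB0
  -- factor out 1 - ‖x‖²
  obtain ⟨n, rfl⟩ : ∃ n, d = n + 1 := ⟨d - 1, by omega⟩
  obtain ⟨g, hg⟩ := Aux.sphere_vanish_factor f (fun x hx => hsph x hx)
  rw [hg] at hlap
  have hgz : g = 0 := Aux.key_inj hd g hlap
  rw [hg, hgz, mul_zero]
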